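/- For every hypergraph H with maximum vertex degree Δ ≥ 2, tw([H]₂) ≥ (stw(H) − 1)/(Δ − 1) − 1; equivalently, stw(H) ≤ (Δ − 1)(tw([H]₂) + 1) + 1. -/

import Mathlib

open Finset

/-- A simple, loopless hypergraph: hyperedges have at least 2 vertices, no hyperedge
contains another, and every vertex lies in some hyperedge. -/
structure SHypergraph (V : Type) [Fintype V] [DecidableEq V] where
  F : Finset (Finset V)
  no_loops : ∀ f ∈ F, 2 ≤ f.card
  simple : ∀ f ∈ F, ∀ g ∈ F, f ⊆ g → f = g
  cover : ∀ v : V, ∃ f ∈ F, v ∈ f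

variable {V : Type} [Fintype V] [DecidableEq V]

/-- A hypergraph is linear if distinct hyperedges share at most one vertex. -/
def SHypergraph.Linear (H : SHypergraph V) : Prop :=
  ∀ f ∈ H.F, ∀ g ∈ H.F, f ≠ g → (f ∩ g).card ≤ 1

/-- The degree of a vertex: the number of hyperedges containing it. -/
def SHypergraph.deg (H : SHypergraph V) (v : V) : ℕ :=
  (H.F.filter (fun f => v ∈ f)).card

/-- The 2-section of a hypergraph. -/
def SHypergraph.twoSection (H : SHypergraph V) : SimpleGraph V where
  Adj u v := u ≠ v ∧ ∃ f ∈ H.F, u ∈ f ∧ v ∈ f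
  symm := ⟨by
    rintro u v ⟨h, f, hf, h1, h2⟩
    exact ⟨h.symm, f, hf, h2, h1⟩⟩
  loopless := ⟨fun v h => h.1 rfl⟩

/-- The rank: the maximum size of a hyperedge. -/
def SHypergraph.rank (H : SHypergraph V) : ℕ := H.F.sup Finset.card

/-- The anti-rank: the minimum size of a hyperedge. -/
noncomputable def SHypergraph.antiRank (H : SHypergraph V) : ℕ :=
  sInf (Finset.card '' (H.F : Set (Finset V)))

/-- The minimum degree. -/
noncomputable def SHypergraph.minDegree (H : SHypergraph V) : ℕ :=
  sInf (Set.range H.deg)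

/-- The maximum degree. -/
def SHypergraph.maxDegree (H : SHypergraph V) : ℕ :=
  Finset.univ.sup H.deg

/-- The average rank: the average size of a hyperedge. -/
noncomputable def SHypergraph.avgRank (H : SHypergraph V) : ℝ :=
  (∑ f ∈ H.F, (f.card : ℝ)) / H.F.card

/-- A tree decomposition of a graph. -/
structure TreeDecomp {W : Type} (G : SimpleGraph W) where
  τ : Type
  finT : Fintype τ
  tree : SimpleGraph τ
  conn : tree.Connected
  acyc : tree.IsAcyclic
  bags : τ → Finset W
  /-- (T1): the bags containing a vertex form a nonempty connected subtree. -/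
  bags_conn : ∀ v : W, (tree.induce {t | v ∈ bags t}).Connected
  /-- (T2): every edge is contained in some bag. -/
  bags_edge : ∀ u v : W, G.Adj u v → ∃ t, u ∈ bags t ∧ v ∈ bags t

/-- The width of a tree decomposition: max bag size minus one. -/
noncomputable def TreeDecomp.width {W : Type} {G : SimpleGraph W} (d : TreeDecomp G) : ℕ :=
  letI := d.finT
  (Finset.univ.sup fun t => (d.bags t).card) - 1

/-- The treewidth of a graph. -/
noncomputable def treewidth {W : Type} (G : SimpleGraph W) : ℕ :=
  sInf {n | ∃ d : TreeDecomp G, d.width = n}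

/-- A supertree decomposition of a hypergraph. -/
structure SupertreeDecomp (H : SHypergraph V) extends TreeDecomp H.twoSection where
  lam : τ → Finset (Finset V)
  lam_sub : ∀ t, lam t ⊆ H.F
  /-- (TII): every bag is covered by its hyperedges. -/
  bag_cover : ∀ t, ∀ v ∈ bags t, ∃ f ∈ lam t, v ∈ f
  /-- (TIII): the nodes containing a hyperedge form a nonempty connected subtree. -/
  lam_conn : ∀ f ∈ H.F, (tree.induce {t | f ∈ lam t}).Connected
  /-- (TIV): intersecting hyperedges appear together in some bag. -/
  lam_meet : ∀ f ∈ H.F, ∀ g ∈ H.F, (f ∩ g).Nonempty → ∃ t, f ∈ lam t ∧ g ∈ lam t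

/-- The width of a supertree decomposition: max number of hyperedges in a bag. -/
noncomputable def SupertreeDecomp.width {H : SHypergraph V} (d : SupertreeDecomp H) : ℕ :=
  letI := d.finT
  Finset.univ.sup fun t => (d.lam t).card

/-- The supertree width of a hypergraph. -/
noncomputable def stw (H : SHypergraph V) : ℕ :=
  sInf {n | ∃ d : SupertreeDecomp H, d.width = n}

/-- The line graph of a hypergraph. -/
def SHypergraph.lineGraph (H : SHypergraph V) : SimpleGraph {f // f ∈ H.F} where
  Adj f g := f ≠ g ∧ ((f : Finset V) ∩ (g : Finset V)).Nonempty
  symm := ⟨by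
    rintro f g ⟨h, hfg⟩
    exact ⟨h.symm, by rwa [Finset.inter_comm]⟩⟩
  loopless := ⟨fun f h => h.1 rfl⟩

/-- A hypergraph is 2-regular if every vertex has degree exactly 2. -/
def SHypergraph.TwoRegular (H : SHypergraph V) : Prop := ∀ v : V, H.deg v = 2

/-- For a 2-regular linear hypergraph, the dual is a simple graph on the hyperedges:
two hyperedges are adjacent iff some vertex lies in both. -/
def SHypergraph.dualGraph (H : SHypergraph V) : SimpleGraph {f // f ∈ H.F} where
  Adj f g := f ≠ g ∧ ∃ v : V, v ∈ (f : Finset V) ∧ v ∈ (g : Finset V)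
  symm := ⟨by
    rintro f g ⟨h, v, h1, h2⟩
    exact ⟨h.symm, v, h2, h1⟩⟩
  loopless := ⟨fun f h => h.1 rfl⟩
section AllTree
open SimpleGraph

namespace TreePath

variable {W : Type} {G : SimpleGraph W} [DecidableEq W]

noncomputable def pth (hc : G.Connected) (a b : W) : G.Walk a b :=
  ((hc.preconnected a b).some).bypass

lemma pth_isPath (hc : G.Connected) (a b : W) : (pth hc a b).IsPath :=
  Walk.bypass_isPath _

lemma pth_unique (hc : G.Connected) (ha : G.IsAcyclic) {a b : W}
    (p : G.Walk a b) (hp : p.IsPath) : p = pth hc a b := by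
  have := ha.path_unique ⟨p, hp⟩ ⟨pth hc a b, pth_isPath hc a b⟩
  exact congrArg Subtype.val this

/-- vertex set of the unique path -/
noncomputable def PS (hc : G.Connected) (a b : W) : List W := (pth hc a b).support

variable (hc : G.Connected) (ha : G.IsAcyclic)
include hc ha

lemma start_mem_PS (a b : W) : a ∈ PS hc a b := Walk.start_mem_support _
lemma end_mem_PS (a b : W) : b ∈ PS hc a b := Walk.end_mem_support _

lemma PS_subset_walk {a b : W} (w : G.Walk a b) : ∀ z ∈ PS hc a b, z ∈ w.support := by
  intro z hz
  have h1 : w.bypass = pth hc a b := pth_unique hc ha _ (Walk.bypass_isPath w)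
  exact Walk.support_bypass_subset w (h1 ▸ hz)

lemma PS_self (a : W) : PS hc a a = [a] := by
  have : pth hc a a = Walk.nil := Walk.isPath_iff_eq_nil.1 (pth_isPath hc a a)
  simp [PS, this]

lemma mem_PS_symm {a b z : W} (hz : z ∈ PS hc a b) : z ∈ PS hc b a := by
  have h1 : (pth hc a b).reverse = pth hc b a :=
    pth_unique hc ha _ ((pth_isPath hc a b).reverse)
  rw [PS, ← h1, Walk.support_reverse, List.mem_reverse]
  exact hz

lemma PS_trans {a b x z : W} (hz : z ∈ PS hc a b) : z ∈ PS hc a x ∨ z ∈ PS hc x b := by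
  have := PS_subset_walk hc ha ((pth hc a x).append (pth hc x b)) z hz
  rw [Walk.mem_support_append_iff] at this
  exact this

end TreePath

namespace T2
set_option linter.unusedSectionVars false

variable {W : Type} {G : SimpleGraph W} [DecidableEq W]
variable (hc : G.Connected) (ha : G.IsAcyclic)
include hc ha

open TreePath

lemma firstVertex_eq {a z b c : W} (hza : z ≠ a)
    {u₁ u₂ : W} (h₁ : G.Adj a u₁) (h₂ : G.Adj a u₂) (w₁ : G.Walk u₁ b) (w₂ : G.Walk u₂ c)
    (hp₁ : (Walk.cons h₁ w₁).IsPath) (hp₂ : (Walk.cons h₂ w₂).IsPath)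
    (hz₁ : z ∈ (Walk.cons h₁ w₁).support) (hz₂ : z ∈ (Walk.cons h₂ w₂).support) : u₁ = u₂ := by
  have hzw₁ : z ∈ w₁.support := by
    rcases List.mem_cons.1 (Walk.support_cons h₁ w₁ ▸ hz₁ : z ∈ a :: w₁.support) with h | h
    · exact absurd h hza
    · exact h
  have hzw₂ : z ∈ w₂.support := by
    rcases List.mem_cons.1 (Walk.support_cons h₂ w₂ ▸ hz₂ : z ∈ a :: w₂.support) with h | h
    · exact absurd h hza
    · exact h
  have e₁ : (Walk.cons h₁ w₁).takeUntil z hz₁ = Walk.cons h₁ (w₁.takeUntil z hzw₁) := by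
    simp [Walk.takeUntil, dif_neg (Ne.symm hza)]
  have e₂ : (Walk.cons h₂ w₂).takeUntil z hz₂ = Walk.cons h₂ (w₂.takeUntil z hzw₂) := by
    simp [Walk.takeUntil, dif_neg (Ne.symm hza)]
  have q₁ : ((Walk.cons h₁ w₁).takeUntil z hz₁).IsPath := hp₁.takeUntil hz₁
  have q₂ : ((Walk.cons h₂ w₂).takeUntil z hz₂).IsPath := hp₂.takeUntil hz₂
  have heq : (Walk.cons h₁ w₁).takeUntil z hz₁ = (Walk.cons h₂ w₂).takeUntil z hz₂ := by
    rw [pth_unique hc ha _ q₁, pth_unique hc ha _ q₂]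
  rw [e₁, e₂] at heq
  injection heq

lemma median_aux : ∀ (n : ℕ) (a b c : W), (pth hc a b).length ≤ n →
    ∃ m, m ∈ PS hc a b ∧ m ∈ PS hc a c ∧ m ∈ PS hc b c := by
  intro n
  induction n with
  | zero =>
    intro a b c hl
    have hab : a = b := Walk.eq_of_length_eq_zero (Nat.le_zero.1 hl)
    subst hab
    exact ⟨a, start_mem_PS hc ha a a, start_mem_PS hc ha a c, start_mem_PS hc ha a c⟩
  | succ n IH =>
    intro a b c hl
    by_cases hmem : a ∈ PS hc b c
    · exact ⟨a, start_mem_PS hc ha a b, start_mem_PS hc ha a c, hmem⟩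
    have hab : a ≠ b := fun h => hmem (h ▸ start_mem_PS hc ha b c)
    have hac : a ≠ c := fun h => hmem (by rw [h]; exact end_mem_PS hc ha b c)
    obtain ⟨u₁, h₁, w₁, he₁⟩ := Walk.exists_eq_cons_of_ne hab (pth hc a b)
    obtain ⟨u₂, h₂, w₂, he₂⟩ := Walk.exists_eq_cons_of_ne hac (pth hc a c)
    have hp₁ : (Walk.cons h₁ w₁).IsPath := he₁ ▸ pth_isPath hc a b
    have hp₂ : (Walk.cons h₂ w₂).IsPath := he₂ ▸ pth_isPath hc a c
    -- u₁ = u₂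
    have hu : u₁ = u₂ := by
      by_contra hne
      set u : G.Walk b c := (pth hc a b).reverse.append (pth hc a c) with hu_def
      have hnd₁ : (pth hc a b).reverse.support.Nodup := by
        rw [Walk.support_reverse]
        exact List.nodup_reverse.2 (pth_isPath hc a b).support_nodup
      have hnd₂ : (pth hc a c).support.tail.Nodup :=
        List.Nodup.sublist (List.tail_sublist _) (pth_isPath hc a c).support_nodup
      have hdisj : ∀ z ∈ (pth hc a b).reverse.support, z ∉ (pth hc a c).support.tail := by
        intro z hz1 hz2
        have hzb : z ∈ PS hc a b := by
          rw [Walk.support_reverse, List.mem_reverse] at hz1; exact hz1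
        have hza : z ≠ a := by
          intro h
          rw [h] at hz2
          have hnd := (pth_isPath hc a c).support_nodup
          rw [Walk.support_eq_cons] at hnd
          exact (List.nodup_cons.1 hnd).1 hz2
        have hzc : z ∈ PS hc a c := List.mem_of_mem_tail hz2
        exact hne (firstVertex_eq hc ha hza h₁ h₂ w₁ w₂ hp₁ hp₂ (he₁ ▸ hzb) (he₂ ▸ hzc))
      have hup : u.IsPath := by
        rw [Walk.isPath_def, hu_def, Walk.support_append]
        exact List.Nodup.append hnd₁ hnd₂ (fun z hz1 hz2 => hdisj z hz1 hz2)
      have : a ∈ PS hc b c := by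
        have h1 : u = pth hc b c := pth_unique hc ha u hup
        show a ∈ (pth hc b c).support
        rw [← h1, hu_def, Walk.mem_support_append_iff]
        left
        rw [Walk.support_reverse, List.mem_reverse]
        exact start_mem_PS hc ha a b
      exact hmem this
    subst hu
    have hw₁eq : w₁ = pth hc u₁ b := pth_unique hc ha w₁ hp₁.of_cons
    have hw₂eq : w₂ = pth hc u₁ c := pth_unique hc ha w₂ hp₂.of_cons
    have hlen : (pth hc u₁ b).length ≤ n := by
      have h2 : (pth hc a b).length = w₁.length + 1 := by rw [he₁]; simp
      rw [← hw₁eq]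
      omega

    obtain ⟨m, hm1, hm2, hm3⟩ := IH u₁ b c hlen
    refine ⟨m, ?_, ?_, hm3⟩
    · rw [PS, he₁, Walk.support_cons]
      exact List.mem_cons_of_mem _ (hw₁eq ▸ hm1 : m ∈ w₁.support)
    · rw [PS, he₂, Walk.support_cons]
      exact List.mem_cons_of_mem _ (hw₂eq ▸ hm2 : m ∈ w₂.support)

lemma median (a b c : W) :
    ∃ m, m ∈ PS hc a b ∧ m ∈ PS hc a c ∧ m ∈ PS hc b c :=
  median_aux hc ha (pth hc a b).length a b c le_rfl

end T2

namespace T3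
set_option linter.unusedSectionVars false

open TreePath T2

variable {W : Type} {G : SimpleGraph W} [DecidableEq W]

def pathClosed (hc : G.Connected) (S : Set W) : Prop :=
  ∀ a ∈ S, ∀ b ∈ S, ∀ z ∈ PS hc a b, z ∈ S

variable (hc : G.Connected) (ha : G.IsAcyclic)
include hc ha

lemma pathClosed_inter {A B : Set W} (hA : pathClosed hc A) (hB : pathClosed hc B) :
    pathClosed hc (A ∩ B) := fun a haa b hb z hz =>
  ⟨hA a haa.1 b hb.1 z hz, hB a haa.2 b hb.2 z hz⟩

lemma PS_closed (a b : W) : pathClosed hc {z | z ∈ PS hc a b} := by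
  intro x hx y hy z hz
  simp only [Set.mem_setOf_eq] at hx hy ⊢
  set p := pth hc a b with hp
  change x ∈ p.support at hx
  have hyy : y ∈ ((p.takeUntil x hx).append (p.dropUntil x hx)).support := by
    rw [Walk.take_spec]; exact hy
  rw [Walk.mem_support_append_iff] at hyy
  rcases hyy with hy1 | hy2
  · -- y on the first segment (before x); use path from y to x
    have hq : (p.takeUntil x hx).IsPath := (pth_isPath hc a b).takeUntil hx
    have hr : ((p.takeUntil x hx).dropUntil y hy1).IsPath := hq.dropUntil hy1
    have he : (p.takeUntil x hx).dropUntil y hy1 = pth hc y x := pth_unique hc ha _ hr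
    have hz' : z ∈ PS hc y x := mem_PS_symm hc ha hz
    have : z ∈ ((p.takeUntil x hx).dropUntil y hy1).support := by rw [he]; exact hz'
    exact Walk.support_takeUntil_subset p hx
      (Walk.support_dropUntil_subset (p.takeUntil x hx) hy1 this)
  · -- y on the second segment
    have hq : (p.dropUntil x hx).IsPath := (pth_isPath hc a b).dropUntil hx
    have hr : ((p.dropUntil x hx).takeUntil y hy2).IsPath := hq.takeUntil hy2
    have he : (p.dropUntil x hx).takeUntil y hy2 = pth hc x y := pth_unique hc ha _ hr
    have : z ∈ ((p.dropUntil x hx).takeUntil y hy2).support := by rw [he]; exact hz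
    exact Walk.support_dropUntil_subset p hx
      (Walk.support_takeUntil_subset (p.dropUntil x hx) hy2 this)

lemma pathClosed_iUnion {ι : Sort*} (S : ι → Set W) (m : W) (hm : ∀ i, m ∈ S i)
    (hcl : ∀ i, pathClosed hc (S i)) : pathClosed hc (⋃ i, S i) := by
  intro a haa b hb z hz
  rw [Set.mem_iUnion] at haa hb ⊢
  obtain ⟨i, hi⟩ := haa
  obtain ⟨j, hj⟩ := hb
  rcases PS_trans hc ha (x := m) hz with h | h
  · exact ⟨i, hcl i a hi m (hm i) z h⟩
  · exact ⟨j, hcl j m (hm j) b hj z h⟩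

lemma helly3 {A B C : Set W} (hA : pathClosed hc A) (hB : pathClosed hc B)
    (hC : pathClosed hc C) (hAB : (A ∩ B).Nonempty) (hAC : (A ∩ C).Nonempty)
    (hBC : (B ∩ C).Nonempty) : (A ∩ B ∩ C).Nonempty := by
  obtain ⟨a, haA, haB⟩ := hAB
  obtain ⟨b, hbA, hbC⟩ := hAC
  obtain ⟨c, hcB, hcC⟩ := hBC
  obtain ⟨m, hm1, hm2, hm3⟩ := median hc ha a b c
  exact ⟨m, ⟨hA a haA b hbA m hm1, hB a haB c hcB m hm2⟩, hC b hbC c hcC m hm3⟩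

lemma hellyFinset {ι : Type} [DecidableEq ι] (s : Finset ι) (hs : s.Nonempty)
    (S : ι → Set W) (hcl : ∀ i ∈ s, pathClosed hc (S i))
    (hne : ∀ i ∈ s, ∀ j ∈ s, (S i ∩ S j).Nonempty) :
    ∃ x, ∀ i ∈ s, x ∈ S i := by
  classical
  induction s using Finset.cons_induction generalizing S with
  | empty => exact ⟨hc.nonempty.some, by simp⟩
  | cons a s hnotmem IH =>
    rcases Finset.eq_empty_or_nonempty s with rfl | hsne
    · obtain ⟨x, hx, _⟩ := hne a (by simp) a (by simp)
      exact ⟨x, by simpa using hx⟩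
    · have IH' := IH hsne (fun i => S i ∩ S a) ?hcl ?hne
      case hcl =>
        intro i hi
        exact pathClosed_inter hc ha (hcl i (Finset.mem_cons_of_mem hi))
          (hcl a (Finset.mem_cons_self a s))
      case hne =>
        intro i hi j hj
        have h3 := helly3 hc ha (hcl i (Finset.mem_cons_of_mem hi))
          (hcl j (Finset.mem_cons_of_mem hj)) (hcl a (Finset.mem_cons_self a s))
          (hne i (Finset.mem_cons_of_mem hi) j (Finset.mem_cons_of_mem hj))
          (hne i (Finset.mem_cons_of_mem hi) a (Finset.mem_cons_self a s))
          (hne j (Finset.mem_cons_of_mem hj) a (Finset.mem_cons_self a s))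
        obtain ⟨x, ⟨h1, h2⟩, h3'⟩ := h3
        exact ⟨x, ⟨h1, h3'⟩, ⟨h2, h3'⟩⟩
      obtain ⟨x, hx⟩ := IH'
      refine ⟨x, ?_⟩
      intro i hi
      rcases Finset.mem_cons.1 hi with rfl | hi'
      · obtain ⟨j, hj⟩ := hsne
        exact (hx j hj).2
      · exact (hx i hi').1

def inducedHom (S : Set W) : G.induce S →g G where
  toFun := Subtype.val
  map_rel' := fun h => h

lemma pathClosed_of_connected_induce {S : Set W} (h : (G.induce S).Connected) :
    pathClosed hc S := by
  intro a haa b hb z hz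
  obtain ⟨w⟩ := h.preconnected ⟨a, haa⟩ ⟨b, hb⟩
  have hsub : ∀ y ∈ (w.map (inducedHom S)).support, y ∈ S := by
    intro y hy
    rw [Walk.support_map] at hy
    obtain ⟨⟨y', hy'⟩, _, rfl⟩ := List.mem_map.1 hy
    exact hy'
  exact hsub z (PS_subset_walk hc ha _ z hz)

lemma connected_induce_of_pathClosed {S : Set W} (hS : S.Nonempty)
    (hcl : pathClosed hc S) : (G.induce S).Connected := by
  have hreach : ∀ {a b : W} (w : G.Walk a b) (hain : a ∈ S) (hbin : b ∈ S)
      (hw : ∀ z ∈ w.support, z ∈ S),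
      (G.induce S).Reachable ⟨a, hain⟩ ⟨b, hbin⟩ := by
    intro a b w
    induction w with
    | nil => intro h1 h2 _; rfl
    | @cons u v c h p IH =>
      intro h1 h2 hw
      have hv : v ∈ S := hw v (by simp)
      have step : (G.induce S).Adj ⟨u, h1⟩ ⟨v, hv⟩ := h
      exact (step.reachable).trans (IH hv h2 (fun z hz => hw z (by simp [hz])))
  haveI : Nonempty (S : Set W) := ⟨⟨hS.choose, hS.choose_spec⟩⟩
  refine ⟨?_⟩
  rintro ⟨a, haa⟩ ⟨b, hb⟩
  exact hreach (pth hc a b) haa hb (fun z hz => hcl a haa b hb z hz)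

end T3

end AllTree

section Construction

open scoped Classical in
section
open scoped Classical
open SimpleGraph TreePath T2 T3

variable {V : Type} [Fintype V] [DecidableEq V]

variable (H : SHypergraph V) (d : TreeDecomp H.twoSection)

/-- The tree of the supertree decomposition: the tree of `d` with one extra leaf per
hyperedge, the leaf for `f` being attached at `o f`. -/
def starGraph (o : {f // f ∈ H.F} → d.τ) : SimpleGraph (d.τ ⊕ {f // f ∈ H.F}) where
  Adj x y := match x, y with
    | Sum.inl a, Sum.inl b => d.tree.Adj a b
    | Sum.inl a, Sum.inr f => o f = a
    | Sum.inr f, Sum.inl a => o f = a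
    | Sum.inr _, Sum.inr _ => False
  symm := ⟨by
    rintro (a | f) (b | g) h
    · exact h.symm
    · exact h
    · exact h
    · exact h.elim⟩
  loopless := ⟨by
    rintro (a | f) h
    · exact d.tree.loopless.irrefl a h
    · exact h.elim⟩

variable (o : {f // f ∈ H.F} → d.τ)

lemma starGraph_adj_inl_inl {a b : d.τ} :
    (starGraph H d o).Adj (Sum.inl a) (Sum.inl b) ↔ d.tree.Adj a b := Iff.rfl

lemma starGraph_adj_inr {f : {f // f ∈ H.F}} {x : d.τ ⊕ {f // f ∈ H.F}} :
    (starGraph H d o).Adj (Sum.inr f) x ↔ x = Sum.inl (o f) := by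
  cases x with
  | inl a =>
    constructor
    · intro h; exact congrArg Sum.inl (Eq.symm (show o f = a from h))
    · intro h; cases h; exact rfl
  | inr g => exact ⟨fun h => h.elim, fun h => by simp at h⟩

@[reducible] def homInl : d.tree →g starGraph H d o where
  toFun := Sum.inl
  map_rel' := fun h => h

lemma star_conn : (starGraph H d o).Connected := by
  haveI : Nonempty (d.τ ⊕ {f // f ∈ H.F}) := ⟨Sum.inl d.conn.nonempty.some⟩
  have hInl : ∀ a b : d.τ, (starGraph H d o).Reachable (Sum.inl a) (Sum.inl b) :=
    fun a b => Reachable.map (homInl H d o) (d.conn.preconnected a b)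
  have hstep : ∀ f : {f // f ∈ H.F},
      (starGraph H d o).Reachable (Sum.inr f) (Sum.inl (o f)) :=
    fun f => ((starGraph_adj_inr H d o).2 rfl).reachable
  refine ⟨?_⟩
  rintro (a | f) (b | g)
  · exact hInl a b
  · exact (hInl a (o g)).trans (hstep g).symm
  · exact (hstep f).trans (hInl (o f) b)
  · exact ((hstep f).trans (hInl (o f) (o g))).trans (hstep g).symm

lemma star_acyc : (starGraph H d o).IsAcyclic := by
  classical
  have claimA : ∀ (f : {f // f ∈ H.F}) (c : (starGraph H d o).Walk (Sum.inr f) (Sum.inr f)),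
      ¬ c.IsCycle := by
    intro f c hcyc
    cases c with
    | nil => exact Walk.IsCycle.not_of_nil hcyc
    | @cons _ u _ h₁ w =>
      have hu : u = Sum.inl (o f) := (starGraph_adj_inr H d o).1 h₁
      subst hu
      have hne : (Sum.inr f : d.τ ⊕ {f // f ∈ H.F}) ≠ Sum.inl (o f) := by simp
      obtain ⟨u₂, h₂, w₂, he⟩ := Walk.exists_eq_cons_of_ne hne w.reverse
      have hu₂ : u₂ = Sum.inl (o f) := (starGraph_adj_inr H d o).1 h₂
      subst hu₂
      have hndL : w.support.Nodup := by
        have h2 := hcyc.2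
        rwa [Walk.support_cons, List.tail_cons] at h2
      have hLrev : w.support.reverse = Sum.inr f :: w₂.support := by
        rw [← Walk.support_reverse, he, Walk.support_cons]
      have hndM : w₂.support.Nodup := by
        have := List.nodup_reverse.2 hndL
        rw [hLrev] at this
        exact (List.nodup_cons.1 this).2
      have hw₂nil : w₂ = Walk.nil := Walk.isPath_iff_eq_nil.1 (Walk.IsPath.mk' hndM)
      have hlen : w.length = 1 := by
        have : w.reverse.length = 1 := by rw [he, hw₂nil]; simp
        rwa [Walk.length_reverse] at this
      have h3 := hcyc.three_le_length
      rw [Walk.length_cons, hlen] at h3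
      omega
  -- lifting all-left walks
  have liftW : ∀ {x y : d.τ ⊕ {f // f ∈ H.F}} (w : (starGraph H d o).Walk x y)
      (_ : ∀ z ∈ w.support, ∃ t, z = Sum.inl t) (a b : d.τ) (hx : x = Sum.inl a)
      (hy : y = Sum.inl b),
      ∃ w' : d.tree.Walk a b, w'.map (homInl H d o) = w.copy hx hy := by
    intro x y w
    induction w with
    | nil =>
      intro hsup a b hx hy
      subst hx
      injection hy with hab
      subst hab
      exact ⟨Walk.nil, by simp⟩
    | @cons x' u y' h q IH =>
      intro hsup a b hx hy
      subst hx
      subst hy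
      obtain ⟨a₁, hu⟩ := hsup u (by simp)
      subst hu
      obtain ⟨q', hq'⟩ := IH (fun z hz => hsup z (by simp [hz])) a₁ b rfl rfl
      refine ⟨Walk.cons (h : d.tree.Adj a a₁) q', ?_⟩
      show Walk.cons _ (q'.map (homInl H d o)) = _
      simp only [Walk.copy_rfl_rfl] at hq' ⊢
      rw [hq']
  intro v c hcyc
  cases v with
  | inr f => exact claimA f c hcyc
  | inl a =>
    rcases Classical.em (∃ (f : {f // f ∈ H.F}),
        (Sum.inr f : d.τ ⊕ {f // f ∈ H.F}) ∈ c.support) with hin | hin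
    · obtain ⟨f, hf⟩ := hin
      haveI : DecidableEq (d.τ ⊕ {f // f ∈ H.F}) := Classical.decEq _
      exact claimA f (c.rotate _ hf) (hcyc.rotate hf)
    · push_neg at hin
      have hsup : ∀ z ∈ c.support, ∃ x, z = Sum.inl x := by
        intro z hz
        cases z with
        | inl x => exact ⟨x, rfl⟩
        | inr f => exact absurd hz (hin f)
      obtain ⟨c', hc'⟩ := liftW c hsup a a rfl rfl
      rw [Walk.copy_rfl_rfl] at hc'
      have : c'.IsCycle := by
        have hinj : Function.Injective (homInl H d o) := fun x y h =>
          Sum.inl_injective (h : Sum.inl x = Sum.inl y)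
        rw [← Walk.map_isCycle_iff_of_injective hinj, hc']
        exact hcyc
      exact d.acyc c' this

noncomputable local instance : DecidableEq d.τ := Classical.decEq _
noncomputable local instance : DecidableEq (d.τ ⊕ {f // f ∈ H.F}) := Classical.decEq _
local instance : Fintype d.τ := d.finT

/-! ### Path support characterizations in the star graph -/

lemma pthOld_map_isPath (a b : d.τ) :
    (((pth d.conn a b).map (homInl H d o))).IsPath :=
  Walk.map_isPath_of_injective (fun x y h => Sum.inl_injective h) (pth_isPath d.conn a b)

lemma homInl_coe : ⇑(homInl H d o) = Sum.inl := rfl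

lemma PS_star_inl_inl (a b : d.τ) :
    PS (star_conn H d o) (Sum.inl a) (Sum.inl b) = (PS d.conn a b).map Sum.inl := by
  have h : ((pth d.conn a b).map (homInl H d o) :
      (starGraph H d o).Walk (Sum.inl a) (Sum.inl b)) =
      pth (star_conn H d o) (Sum.inl a) (Sum.inl b) :=
    pth_unique (star_conn H d o) (star_acyc H d o) _ (pthOld_map_isPath H d o a b)
  rw [PS, ← h, Walk.support_map, homInl_coe]
  rfl

lemma PS_star_inr_inl (f : {f // f ∈ H.F}) (b : d.τ) :
    PS (star_conn H d o) (Sum.inr f) (Sum.inl b) =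
      Sum.inr f :: (PS d.conn (o f) b).map Sum.inl := by
  have hadj : (starGraph H d o).Adj (Sum.inr f) (Sum.inl (o f)) := rfl
  have hpath : (Walk.cons hadj ((pth d.conn (o f) b).map (homInl H d o))).IsPath := by
    rw [Walk.cons_isPath_iff]
    refine ⟨pthOld_map_isPath H d o (o f) b, ?_⟩
    intro hmem
    rw [Walk.support_map] at hmem
    obtain ⟨z, _, hz⟩ := List.mem_map.1 hmem
    exact (by simp : (Sum.inl z : d.τ ⊕ {f // f ∈ H.F}) ≠ Sum.inr f) hz
  have h : (Walk.cons hadj ((pth d.conn (o f) b).map (homInl H d o)) :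
      (starGraph H d o).Walk (Sum.inr f) (Sum.inl b)) =
      pth (star_conn H d o) (Sum.inr f) (Sum.inl b) :=
    pth_unique (star_conn H d o) (star_acyc H d o) _ hpath
  rw [PS, ← h, Walk.support_cons, Walk.support_map, homInl_coe]
  rfl

lemma PS_star_inr_inr {f g : {f // f ∈ H.F}} (hfg : f ≠ g) :
    PS (star_conn H d o) (Sum.inr f) (Sum.inr g) =
      Sum.inr f :: ((PS d.conn (o f) (o g)).map Sum.inl ++ [Sum.inr g]) := by
  have hadj1 : (starGraph H d o).Adj (Sum.inr f) (Sum.inl (o f)) := rfl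
  have hadj2 : (starGraph H d o).Adj (Sum.inl (o g)) (Sum.inr g) := rfl
  set inner := (pth d.conn (o f) (o g)).map (homInl H d o) with hinner
  have hpath : (Walk.cons hadj1 (inner.concat hadj2)).IsPath := by
    rw [Walk.isPath_def, Walk.support_cons, Walk.support_concat, hinner, Walk.support_map]
    have hnd : ((pth d.conn (o f) (o g)).support.map Sum.inl
        (β := d.τ ⊕ {f // f ∈ H.F})).Nodup :=
      ((pth_isPath d.conn (o f) (o g)).support_nodup).map (fun x y h => Sum.inl_injective h)
    rw [List.nodup_cons, List.nodup_append]
    refine ⟨?_, hnd, by simp, ?_⟩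
    · intro hmem
      rcases List.mem_append.1 hmem with hmem | hmem
      · obtain ⟨z, _, hz⟩ := List.mem_map.1 hmem
        exact (by simp : (Sum.inl z : d.τ ⊕ {f // f ∈ H.F}) ≠ Sum.inr f) hz
      · exact hfg (Sum.inr_injective (List.mem_singleton.1 hmem))
    · intro z hz1 y hz2 hzy
      rw [List.mem_singleton] at hz2
      obtain ⟨z', _, hz'⟩ := List.mem_map.1 hz1
      rw [← hz', hz2] at hzy
      exact (by simp : (Sum.inl z' : d.τ ⊕ {f // f ∈ H.F}) ≠ Sum.inr g) hzy
  have h : (Walk.cons hadj1 (inner.concat hadj2) :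
      (starGraph H d o).Walk (Sum.inr f) (Sum.inr g)) =
      pth (star_conn H d o) (Sum.inr f) (Sum.inr g) :=
    pth_unique (star_conn H d o) (star_acyc H d o) _ hpath
  rw [PS, ← h, Walk.support_cons, Walk.support_concat, hinner, Walk.support_map, homInl_coe]
  rfl

/-! ### The supertree decomposition -/

variable (p : V → {f // f ∈ H.F})

noncomputable def Sf (f : {f // f ∈ H.F}) : Set (d.τ ⊕ {f // f ∈ H.F}) :=
  ⋃ (v : V) (_ : v ∈ f.1), {z | z ∈ PS (star_conn H d o) (Sum.inr f) (Sum.inr (p v))}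

noncomputable def PvSet (v : V) : Set (d.τ ⊕ {f // f ∈ H.F}) :=
  ⋃ (f : {f // f ∈ H.F}) (_ : v ∈ f.1),
    {z | z ∈ PS (star_conn H d o) (Sum.inr f) (Sum.inr (p v))}

open scoped Classical in
noncomputable def lamStar (t : d.τ ⊕ {f // f ∈ H.F}) : Finset (Finset V) :=
  (H.F.attach.filter (fun f => t ∈ Sf H d o p f)).image Subtype.val

open scoped Classical in
noncomputable def bagsStar (t : d.τ ⊕ {f // f ∈ H.F}) : Finset V :=
  Finset.univ.filter (fun v => t ∈ PvSet H d o p v)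

lemma mem_Sf_iff {t : d.τ ⊕ {f // f ∈ H.F}} {f : {f // f ∈ H.F}} :
    t ∈ Sf H d o p f ↔
      ∃ v ∈ f.1, t ∈ PS (star_conn H d o) (Sum.inr f) (Sum.inr (p v)) := by
  simp [Sf]

lemma mem_PvSet_iff {t : d.τ ⊕ {f // f ∈ H.F}} {v : V} :
    t ∈ PvSet H d o p v ↔
      ∃ f : {f // f ∈ H.F}, v ∈ f.1 ∧
        t ∈ PS (star_conn H d o) (Sum.inr f) (Sum.inr (p v)) := by
  simp [PvSet]

lemma mem_lamStar_iff {t : d.τ ⊕ {f // f ∈ H.F}} {g : Finset V} :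
    g ∈ lamStar H d o p t ↔ ∃ hg : g ∈ H.F, t ∈ Sf H d o p ⟨g, hg⟩ := by
  constructor
  · intro h
    obtain ⟨f, hf, rfl⟩ := Finset.mem_image.1 h
    have := (Finset.mem_filter.1 hf).2
    exact ⟨f.2, by simpa using this⟩
  · rintro ⟨hg, ht⟩
    exact Finset.mem_image.2 ⟨⟨g, hg⟩, Finset.mem_filter.2 ⟨Finset.mem_attach _ _, ht⟩, rfl⟩

lemma mem_bagsStar_iff {t : d.τ ⊕ {f // f ∈ H.F}} {v : V} :
    v ∈ bagsStar H d o p t ↔ t ∈ PvSet H d o p v := by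
  simp [bagsStar]

variable (hp : ∀ v, v ∈ (p v).1)

lemma Sf_pathClosed (f : {f // f ∈ H.F}) :
    T3.pathClosed (star_conn H d o) (Sf H d o p f) := by
  have : Sf H d o p f = ⋃ (i : {v : V // v ∈ f.1}),
      {z | z ∈ PS (star_conn H d o) (Sum.inr f) (Sum.inr (p i.1))} := by
    ext z
    simp only [Sf, Set.mem_iUnion, Set.mem_setOf_eq]
    exact ⟨fun ⟨v, hv, h⟩ => ⟨⟨v, hv⟩, h⟩, fun ⟨i, h⟩ => ⟨i.1, i.2, h⟩⟩
  rw [this]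
  exact pathClosed_iUnion (star_conn H d o) (star_acyc H d o) _ (Sum.inr f)
    (fun i => start_mem_PS (star_conn H d o) (star_acyc H d o) _ _)
    (fun i => PS_closed (star_conn H d o) (star_acyc H d o) _ _)

lemma PvSet_pathClosed (v : V) :
    T3.pathClosed (star_conn H d o) (PvSet H d o p v) := by
  have : PvSet H d o p v = ⋃ (i : {f : {f // f ∈ H.F} // v ∈ f.1.1}),
      {z | z ∈ PS (star_conn H d o) (Sum.inr i.1) (Sum.inr (p v))} := by
    ext z
    simp only [PvSet, Set.mem_iUnion, Set.mem_setOf_eq]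
    exact ⟨fun ⟨f, hf, h⟩ => ⟨⟨f, hf⟩, h⟩, fun ⟨i, h⟩ => ⟨i.1, i.2, h⟩⟩
  rw [this]
  exact pathClosed_iUnion (star_conn H d o) (star_acyc H d o) _ (Sum.inr (p v))
    (fun i => end_mem_PS (star_conn H d o) (star_acyc H d o) _ _)
    (fun i => PS_closed (star_conn H d o) (star_acyc H d o) _ _)

lemma Sf_nonempty (f : {f // f ∈ H.F}) : (Sf H d o p f).Nonempty := by
  have hcard := H.no_loops f.1 f.2
  obtain ⟨v, hv⟩ := Finset.card_pos.1 (lt_of_lt_of_le Nat.zero_lt_two hcard)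
  exact ⟨Sum.inr f, (mem_Sf_iff H d o p).2
    ⟨v, hv, start_mem_PS (star_conn H d o) (star_acyc H d o) _ _⟩⟩

include hp in
lemma PvSet_nonempty (v : V) : (PvSet H d o p v).Nonempty :=
  ⟨Sum.inr (p v), (mem_PvSet_iff H d o p).2
    ⟨p v, hp v, end_mem_PS (star_conn H d o) (star_acyc H d o) _ _⟩⟩

/-- The supertree decomposition built from a tree decomposition. -/
noncomputable def megaDecomp : SupertreeDecomp H where
  τ := d.τ ⊕ {f // f ∈ H.F}
  finT := inferInstance
  tree := starGraph H d o
  conn := star_conn H d o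
  acyc := star_acyc H d o
  bags := bagsStar H d o p
  bags_conn := by
    intro v
    have hset : {t | v ∈ bagsStar H d o p t} = PvSet H d o p v := by
      ext t; exact mem_bagsStar_iff H d o p
    rw [hset]
    exact connected_induce_of_pathClosed (star_conn H d o) (star_acyc H d o)
      (PvSet_nonempty H d o p hp v) (PvSet_pathClosed H d o p v)
  bags_edge := by
    intro u v huv
    obtain ⟨hne, f, hf, hu, hv⟩ := huv
    refine ⟨Sum.inr ⟨f, hf⟩, ?_, ?_⟩
    · exact (mem_bagsStar_iff H d o p).2 ((mem_PvSet_iff H d o p).2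
        ⟨⟨f, hf⟩, hu, start_mem_PS (star_conn H d o) (star_acyc H d o) _ _⟩)
    · exact (mem_bagsStar_iff H d o p).2 ((mem_PvSet_iff H d o p).2
        ⟨⟨f, hf⟩, hv, start_mem_PS (star_conn H d o) (star_acyc H d o) _ _⟩)
  lam := lamStar H d o p
  lam_sub := by
    intro t g hg
    exact ((mem_lamStar_iff H d o p).1 hg).choose
  bag_cover := by
    intro t v hv
    obtain ⟨f, hvf, hPS⟩ := (mem_PvSet_iff H d o p).1 ((mem_bagsStar_iff H d o p).1 hv)
    exact ⟨f.1, (mem_lamStar_iff H d o p).2 ⟨f.2, (mem_Sf_iff H d o p).2 ⟨v, hvf, by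
      convert hPS⟩⟩, hvf⟩
  lam_conn := by
    intro g hg
    have hset : {t | g ∈ lamStar H d o p t} = Sf H d o p ⟨g, hg⟩ := by
      ext t
      simp only [Set.mem_setOf_eq, mem_lamStar_iff H d o p]
      exact ⟨fun ⟨h1, h2⟩ => h2, fun h => ⟨hg, h⟩⟩
    rw [hset]
    exact connected_induce_of_pathClosed (star_conn H d o) (star_acyc H d o)
      (Sf_nonempty H d o p ⟨g, hg⟩) (Sf_pathClosed H d o p ⟨g, hg⟩)
  lam_meet := by
    intro g hg g' hg' hmeet
    obtain ⟨v, hv⟩ := hmeet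
    rw [Finset.mem_inter] at hv
    refine ⟨Sum.inr (p v), ?_, ?_⟩
    · exact (mem_lamStar_iff H d o p).2 ⟨hg, (mem_Sf_iff H d o p).2
        ⟨v, hv.1, end_mem_PS (star_conn H d o) (star_acyc H d o) _ _⟩⟩
    · exact (mem_lamStar_iff H d o p).2 ⟨hg', (mem_Sf_iff H d o p).2
        ⟨v, hv.2, end_mem_PS (star_conn H d o) (star_acyc H d o) _ _⟩⟩

/-! ### Width bounds -/

lemma bags_pathClosed (v : V) : T3.pathClosed d.conn {t | v ∈ d.bags t} := by
  letI : DecidableEq d.τ := Classical.decEq _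
  exact pathClosed_of_connected_induce d.conn d.acyc (d.bags_conn v)

include hp in
lemma lamStar_inl_subset (ho : ∀ f : {f // f ∈ H.F}, ∀ v ∈ f.1, v ∈ d.bags (o f)) (a : d.τ) :
    lamStar H d o p (Sum.inl a) ⊆
      (d.bags a).biUnion (fun v => (H.F.filter (fun g => v ∈ g)).erase (p v).1) := by
  intro g hg
  obtain ⟨hgF, hSf⟩ := (mem_lamStar_iff H d o p).1 hg
  obtain ⟨v, hv, hPS⟩ := (mem_Sf_iff H d o p).1 hSf
  set f : {f // f ∈ H.F} := ⟨g, hgF⟩ with hf_def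
  by_cases hfp : f = p v
  · rw [hfp, PS_self (star_conn H d o) (star_acyc H d o)] at hPS
    simp at hPS
  · rw [PS_star_inr_inr H d o hfp] at hPS
    rcases List.mem_cons.1 hPS with h | h
    · simp at h
    rcases List.mem_append.1 h with h | h
    · obtain ⟨c, hc1, hc2⟩ := List.mem_map.1 h
      have hac : c = a := Sum.inl_injective hc2
      subst hac
      have hva : v ∈ d.bags c :=
        bags_pathClosed H d v (o f) (ho f v hv) (o (p v)) (ho (p v) v (hp v)) c hc1
      refine Finset.mem_biUnion.2 ⟨v, hva, Finset.mem_erase.2 ⟨?_, ?_⟩⟩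
      · intro he
        exact hfp (Subtype.ext he)
      · exact Finset.mem_filter.2 ⟨hgF, hv⟩
    · simp at h

include hp in
lemma lamStar_inr_subset (g : {f // f ∈ H.F}) :
    lamStar H d o p (Sum.inr g) ⊆
      insert g.1 (g.1.biUnion (fun v => (H.F.filter (fun h => v ∈ h)).erase g.1)) := by
  intro h hh
  obtain ⟨hhF, hSf⟩ := (mem_lamStar_iff H d o p).1 hh
  obtain ⟨v, hv, hPS⟩ := (mem_Sf_iff H d o p).1 hSf
  set f : {f // f ∈ H.F} := ⟨h, hhF⟩ with hf_def
  by_cases hfp : f = p v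
  · rw [hfp, PS_self (star_conn H d o) (star_acyc H d o)] at hPS
    have : g = p v := Sum.inr_injective (List.mem_singleton.1 hPS)
    refine Finset.mem_insert.2 (Or.inl ?_)
    rw [show h = f.1 from rfl, hfp, ← this]
  · rw [PS_star_inr_inr H d o hfp] at hPS
    rcases List.mem_cons.1 hPS with heq | hmem
    · refine Finset.mem_insert.2 (Or.inl ?_)
      have : g = f := Sum.inr_injective heq
      rw [this]
    rcases List.mem_append.1 hmem with hmem | hmem
    · obtain ⟨c, _, hc2⟩ := List.mem_map.1 hmem
      simp at hc2
    · have hgp : g = p v := Sum.inr_injective (List.mem_singleton.1 hmem)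
      refine Finset.mem_insert.2 (Or.inr (Finset.mem_biUnion.2 ⟨v, ?_, ?_⟩))
      · rw [hgp]; exact hp v
      · refine Finset.mem_erase.2 ⟨?_, Finset.mem_filter.2 ⟨hhF, hv⟩⟩
        intro he
        exact hfp (Subtype.ext (by rw [show f.1 = h from rfl, he, hgp]))

include hp in
lemma edgeCount_le (v : V) :
    ((H.F.filter (fun g => v ∈ g)).erase (p v).1).card ≤ H.maxDegree - 1 := by
  have h1 : ((H.F.filter (fun g => v ∈ g)).erase (p v).1).card = H.deg v - 1 := by
    rw [Finset.card_erase_of_mem (Finset.mem_filter.2 ⟨(p v).2, hp v⟩)]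
    rfl
  rw [h1]
  exact Nat.sub_le_sub_right (Finset.le_sup (Finset.mem_univ v)) 1

include hp in
lemma lamStar_inl_card (ho : ∀ f : {f // f ∈ H.F}, ∀ v ∈ f.1, v ∈ d.bags (o f))
    (k : ℕ) (hbag : ∀ t, (d.bags t).card ≤ k) (a : d.τ) :
    (lamStar H d o p (Sum.inl a)).card ≤ (H.maxDegree - 1) * k := by
  calc (lamStar H d o p (Sum.inl a)).card
      ≤ ((d.bags a).biUnion
          (fun v => (H.F.filter (fun g => v ∈ g)).erase (p v).1)).card :=
        Finset.card_le_card (lamStar_inl_subset H d o p hp ho a)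
    _ ≤ ∑ v ∈ d.bags a, ((H.F.filter (fun g => v ∈ g)).erase (p v).1).card :=
        Finset.card_biUnion_le
    _ ≤ ∑ _v ∈ d.bags a, (H.maxDegree - 1) :=
        Finset.sum_le_sum (fun v _ => edgeCount_le H p hp v)
    _ = (d.bags a).card * (H.maxDegree - 1) := by
        rw [Finset.sum_const, smul_eq_mul]
    _ ≤ k * (H.maxDegree - 1) := Nat.mul_le_mul_right _ (hbag a)
    _ = (H.maxDegree - 1) * k := Nat.mul_comm _ _

include hp in
lemma lamStar_inr_card (ho : ∀ f : {f // f ∈ H.F}, ∀ v ∈ f.1, v ∈ d.bags (o f))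
    (k : ℕ) (hbag : ∀ t, (d.bags t).card ≤ k) (g : {f // f ∈ H.F}) :
    (lamStar H d o p (Sum.inr g)).card ≤ (H.maxDegree - 1) * k + 1 := by
  have hgk : g.1.card ≤ k := by
    calc g.1.card ≤ (d.bags (o g)).card :=
          Finset.card_le_card (fun v hv => ho g v hv)
      _ ≤ k := hbag (o g)
  calc (lamStar H d o p (Sum.inr g)).card
      ≤ (insert g.1 (g.1.biUnion
          (fun v => (H.F.filter (fun h => v ∈ h)).erase g.1))).card :=
        Finset.card_le_card (lamStar_inr_subset H d o p hp g)
    _ ≤ (g.1.biUnion (fun v => (H.F.filter (fun h => v ∈ h)).erase g.1)).card + 1 :=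
        Finset.card_insert_le _ _
    _ ≤ (∑ v ∈ g.1, ((H.F.filter (fun h => v ∈ h)).erase g.1).card) + 1 :=
        Nat.add_le_add_right Finset.card_biUnion_le 1
    _ ≤ (∑ _v ∈ g.1, (H.maxDegree - 1)) + 1 := by
        refine Nat.add_le_add_right (Finset.sum_le_sum fun v hv => ?_) 1
        have h1 : ((H.F.filter (fun h => v ∈ h)).erase g.1).card = H.deg v - 1 := by
          rw [Finset.card_erase_of_mem (Finset.mem_filter.2 ⟨g.2, hv⟩)]
          rfl
        rw [h1]
        exact Nat.sub_le_sub_right (Finset.le_sup (Finset.mem_univ v)) 1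
    _ = g.1.card * (H.maxDegree - 1) + 1 := by rw [Finset.sum_const, smul_eq_mul]
    _ ≤ k * (H.maxDegree - 1) + 1 := Nat.add_le_add_right (Nat.mul_le_mul_right _ hgk) 1
    _ = (H.maxDegree - 1) * k + 1 := by rw [Nat.mul_comm]

include hp in
lemma megaDecomp_width (ho : ∀ f : {f // f ∈ H.F}, ∀ v ∈ f.1, v ∈ d.bags (o f))
    (k : ℕ) (hbag : ∀ t, (d.bags t).card ≤ k) :
    (megaDecomp H d o p hp).width ≤ (H.maxDegree - 1) * k + 1 := by
  apply Finset.sup_le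
  rintro (a | g) _
  · exact le_trans (lamStar_inl_card H d o p hp ho k hbag a) (Nat.le_succ _)
  · exact lamStar_inr_card H d o p hp ho k hbag g

end
end Construction

/-- the one-node tree decomposition -/
noncomputable def trivialTD {V : Type} [Fintype V] [DecidableEq V] (H : SHypergraph V) :
    TreeDecomp H.twoSection where
  τ := Unit
  finT := inferInstance
  tree := ⊥
  conn := by
    refine ⟨fun x y => ?_⟩
    have : x = y := Subsingleton.elim x y
    rw [this]
  acyc := by
    intro v c hc
    cases c with
    | nil => exact SimpleGraph.Walk.IsCycle.not_of_nil hc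
    | cons h _ => exact h.elim
  bags := fun _ => Finset.univ
  bags_conn := by
    intro v
    haveI : Nonempty {t : Unit | v ∈ Finset.univ} := ⟨⟨(), by simp⟩⟩
    refine ⟨fun x y => ?_⟩
    have : x = y := Subsingleton.elim x y
    rw [this]
  bags_edge := fun u v _ => ⟨(), Finset.mem_univ u, Finset.mem_univ v⟩
/-- if `Δ ≥ 2` then `tw([H]₂) ≥ (stw(H) − 1)/(Δ − 1) − 1`, equivalently
`stw(H) ≤ (Δ − 1)(tw([H]₂) + 1) + 1`. -/
theorem treewidth_twoSection_ge_stw_div (H : SHypergraph V) (hΔ : 2 ≤ H.maxDegree) :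
    ((stw H : ℝ) - 1) / ((H.maxDegree : ℝ) - 1) - 1 ≤ (treewidth H.twoSection : ℝ) ∧
    stw H ≤ (H.maxDegree - 1) * (treewidth H.twoSection + 1) + 1 := by
  classical
  have hNat : stw H ≤ (H.maxDegree - 1) * (treewidth H.twoSection + 1) + 1 := by
    obtain ⟨d, hd⟩ : ∃ dd : TreeDecomp H.twoSection, dd.width = treewidth H.twoSection :=
      Nat.sInf_mem (⟨(trivialTD H).width, trivialTD H, rfl⟩ :
        {n | ∃ dd : TreeDecomp H.twoSection, dd.width = n}.Nonempty)
    letI := d.finT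
    letI : DecidableEq d.τ := Classical.decEq _
    have hbag : ∀ t, (d.bags t).card ≤ treewidth H.twoSection + 1 := by
      intro t
      have h1 : (d.bags t).card ≤ Finset.univ.sup (fun t => (d.bags t).card) :=
        Finset.le_sup (f := fun t => (d.bags t).card) (Finset.mem_univ t)
      have h2 : (Finset.univ.sup fun t => (d.bags t).card) - 1 = treewidth H.twoSection := hd
      omega
    -- choose, for each hyperedge, a common bag (Helly)
    have hoex : ∀ f : {f // f ∈ H.F}, ∃ t : d.τ, ∀ v ∈ f.1, v ∈ d.bags t := by
      intro f
      have hne : f.1.Nonempty := Finset.card_pos.1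
        (lt_of_lt_of_le Nat.zero_lt_two (H.no_loops f.1 f.2))
      have hhelly := T3.hellyFinset d.conn d.acyc f.1 hne
        (fun v => {t | v ∈ d.bags t}) (fun v _ => bags_pathClosed H d v) ?hinter
      case hinter =>
        intro i hi j hj
        by_cases hij : i = j
        · subst hij
          obtain ⟨t⟩ := (d.bags_conn i).nonempty
          exact ⟨t.1, t.2, t.2⟩
        · have hadj : H.twoSection.Adj i j := ⟨hij, f.1, f.2, hi, hj⟩
          obtain ⟨t, h1, h2⟩ := d.bags_edge i j hadj
          exact ⟨t, h1, h2⟩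
      obtain ⟨t, ht⟩ := hhelly
      exact ⟨t, ht⟩
    set o : {f // f ∈ H.F} → d.τ := fun f => (hoex f).choose with ho_def
    have ho : ∀ f : {f // f ∈ H.F}, ∀ v ∈ f.1, v ∈ d.bags (o f) :=
      fun f => (hoex f).choose_spec
    have hpex : ∀ v : V, ∃ f : {f // f ∈ H.F}, v ∈ f.1 := by
      intro v
      obtain ⟨f, hf, hv⟩ := H.cover v
      exact ⟨⟨f, hf⟩, hv⟩
    set p : V → {f // f ∈ H.F} := fun v => (hpex v).choose with hp_def
    have hp : ∀ v, v ∈ (p v).1 := fun v => (hpex v).choose_spec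
    have hw := megaDecomp_width H d o p hp ho (treewidth H.twoSection + 1) hbag
    exact le_trans (Nat.sInf_le ⟨megaDecomp H d o p hp, rfl⟩) hw
  refine ⟨?_, hNat⟩
  have hD : (2:ℝ) ≤ (H.maxDegree : ℝ) := by exact_mod_cast hΔ
  have hpos : (0:ℝ) < (H.maxDegree : ℝ) - 1 := by linarith
  have h1 : ((H.maxDegree - 1 : ℕ) : ℝ) = (H.maxDegree : ℝ) - 1 := by
    have hone : 1 ≤ H.maxDegree := by omega
    push_cast [Nat.cast_sub hone]
    ring
  have hcast : (stw H : ℝ) ≤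
      ((H.maxDegree : ℝ) - 1) * ((treewidth H.twoSection : ℝ) + 1) + 1 := by
    calc (stw H : ℝ)
        ≤ (((H.maxDegree - 1) * (treewidth H.twoSection + 1) + 1 : ℕ) : ℝ) := by
          exact_mod_cast hNat
      _ = ((H.maxDegree : ℝ) - 1) * ((treewidth H.twoSection : ℝ) + 1) + 1 := by
          push_cast [h1]
          ring
  rw [sub_le_iff_le_add, div_le_iff₀ hpos]
  nlinarith [hcast]
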